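/- Let G = (V, E) be a finite directed graph with node capacities c : V → ℝ≥0, let s, t ∈ V be distinct, and let f be an st-flow in G. If the support of f (the set of pairs (u,v) ∈ V × V with f(u,v) > 0, viewed as a directed graph) contains an anti-directed cycle, then there exists an st-flow f' in G with val(f') = val(f) whose support is a proper subset of the support of f; in particular vol(f') < vol(f). -/
import Mathlib


/-- An `st`-flow in a directed graph `E` on a finite vertex type, with node
capacities `c`. -/
def IsNodeCapFlow {V : Type*} [Fintype V] (E : V → V → Prop) (c : V → NNReal)
    (s t : V) (f : V → V → ℝ) : Prop :=
  (∀ u v : V, 0 ≤ f u v) ∧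
  (∀ u v : V, 0 < f u v → E u v) ∧
  (∀ v : V, v ≠ s → v ≠ t →
    (∑ u, f u v) = (∑ w, f v w) ∧ (∑ u, f u v) ≤ (c v : ℝ))

/-- The value of an `st`-flow: total flow leaving `s` minus total flow entering `s`. -/
def flowVal {V : Type*} [Fintype V] (s : V) (f : V → V → ℝ) : ℝ :=
  (∑ w, f s w) - (∑ u, f u s)

/-- A directed graph `D` contains an anti-directed cycle: a cyclic sequence
`u₁, …, u_{2ℓ}` with `ℓ ≥ 2` in which every even-indexed vertex is the source of its two
incident cycle edges (here the even-indexed vertices are `x i` and the odd-indexed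
vertices are `y i`, with edges `(x i, y i)` and `(x i, y (i-1))` for all `i : ZMod ℓ`),
where the even-indexed vertices are pairwise distinct and the odd-indexed vertices are
pairwise distinct. -/
def HasAntiDirectedCycle {V : Type*} (D : V → V → Prop) : Prop :=
  ∃ (ℓ : ℕ) (x y : ZMod ℓ → V), 2 ≤ ℓ ∧
    Function.Injective x ∧ Function.Injective y ∧
    ∀ i : ZMod ℓ, D (x i) (y i) ∧ D (x i) (y (i - 1))

private lemma aux_sum_ind {V : Type*} [Fintype V] {ι : Type*} (gg : ι → V)
    (P : ι → Prop) (Q : V → Prop) [DecidablePred Q] [Decidable (∃ i, P i)]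
    (hQ : ∀ u, Q u ↔ ∃ i, u = gg i ∧ P i)
    (hP : ∀ i j, P i → P j → i = j) :
    ∑ u : V, (if Q u then (1:ℝ) else 0) = if ∃ i, P i then 1 else 0 := by
  classical
  by_cases h : ∃ i, P i
  · obtain ⟨j, hj⟩ := h
    rw [if_pos ⟨j, hj⟩]
    have key : ∀ u : V, (if Q u then (1:ℝ) else 0) = if u = gg j then 1 else 0 := by
      intro u
      by_cases hu : u = gg j
      · rw [if_pos hu, if_pos ((hQ u).mpr ⟨j, hu, hj⟩)]
      · rw [if_neg hu, if_neg]
        intro hQu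
        obtain ⟨i, hi, hPi⟩ := (hQ u).mp hQu
        exact hu (by rw [hi, hP i j hPi hj])
    rw [Finset.sum_congr rfl fun u _ => key u]
    simp
  · rw [if_neg h]
    refine Finset.sum_eq_zero fun u _ => ?_
    rw [if_neg]
    intro hQu
    obtain ⟨i, _, hPi⟩ := (hQ u).mp hQu
    exact h ⟨i, hPi⟩


/-- If the support of an `st`-flow `f` in a node-capacitated directed graph
contains an anti-directed cycle, then there is an `st`-flow `f'` of the same value whose
support is a proper subset of the support of `f`; in particular `vol(f') < vol(f)`. -/
theorem anti_directed_cycle_elimination {V : Type*} [Fintype V]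
    (E : V → V → Prop) (hE : ∀ v : V, ¬ E v v)
    (c : V → NNReal) (s t : V) (hst : s ≠ t)
    (f : V → V → ℝ) (hf : IsNodeCapFlow E c s t f)
    (hcycle : HasAntiDirectedCycle (fun u v => 0 < f u v)) :
    ∃ f' : V → V → ℝ, IsNodeCapFlow E c s t f' ∧
      flowVal s f' = flowVal s f ∧
      {p : V × V | 0 < f' p.1 p.2} ⊂ {p : V × V | 0 < f p.1 p.2} ∧
      {p : V × V | 0 < f' p.1 p.2}.ncard < {p : V × V | 0 < f p.1 p.2}.ncard := by
  classical
  obtain ⟨ℓ, x, y, hℓ, hx, hy, hedge⟩ := hcycle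
  haveI : NeZero ℓ := ⟨by omega⟩
  haveI : Fact (1 < ℓ) := ⟨hℓ⟩
  obtain ⟨h0, hE', hcons⟩ := hf
  set ε := Finset.univ.inf' Finset.univ_nonempty (fun i : ZMod ℓ => f (x i) (y i)) with hε
  have hεpos : (0:ℝ) < ε := by
    rw [hε, Finset.lt_inf'_iff]
    intro i _
    exact (hedge i).1
  have hεle : ∀ i, ε ≤ f (x i) (y i) := fun i => Finset.inf'_le _ (Finset.mem_univ i)
  obtain ⟨i0, -, hi0⟩ := Finset.exists_mem_eq_inf' Finset.univ_nonempty
    (fun i : ZMod ℓ => f (x i) (y i))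
  have hεi0 : ε = f (x i0) (y i0) := hε.trans hi0
  set A : V → V → ℝ := fun u v => if ∃ i, u = x i ∧ v = y i then 1 else 0 with hA
  set B : V → V → ℝ := fun u v => if ∃ i, u = x i ∧ v = y (i-1) then 1 else 0 with hB
  set g : V → V → ℝ := fun u v => f u v - ε * A u v + ε * B u v with hg
  have hdisj : ∀ u v, (∃ i, u = x i ∧ v = y i) → ¬ (∃ j, u = x j ∧ v = y (j-1)) := by
    rintro u v ⟨i, rfl, rfl⟩ ⟨j, hxj, hyj⟩
    have hij : i = j := hx hxj
    subst hij
    have h1 : i - 1 = i := (hy hyj).symm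
    have h2 : (1 : ZMod ℓ) = 0 := sub_eq_self.mp h1
    exact one_ne_zero h2
  have hBnn : ∀ u v, (0:ℝ) ≤ B u v := by
    intro u v
    simp only [hB]
    split <;> norm_num
  have hgf : ∀ u v, 0 < g u v → 0 < f u v := by
    intro u v hguv
    by_cases hb : ∃ i, u = x i ∧ v = y (i-1)
    · obtain ⟨i, rfl, rfl⟩ := hb
      exact (hedge i).2
    · by_cases ha : ∃ i, u = x i ∧ v = y i
      · obtain ⟨i, rfl, rfl⟩ := ha
        exact (hedge i).1
      · have : g u v = f u v := by
          simp only [hg, hA, hB]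
          rw [if_neg ha, if_neg hb]
          ring
        rwa [this] at hguv
  have hg0 : ∀ u v, 0 ≤ g u v := by
    intro u v
    by_cases ha : ∃ i, u = x i ∧ v = y i
    · have hb := hdisj u v ha
      have heq : g u v = f u v - ε := by
        simp only [hg, hA, hB]
        rw [if_pos ha, if_neg hb]
        ring
      rw [heq]
      obtain ⟨i, rfl, rfl⟩ := ha
      linarith [hεle i]
    · have heq : g u v = f u v + ε * B u v := by
        simp only [hg, hA]
        rw [if_neg ha]
        ring
      rw [heq]
      exact add_nonneg (h0 u v) (mul_nonneg hεpos.le (hBnn u v))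
  have hcol : ∀ v, ∑ u, g u v = ∑ u, f u v := by
    intro v
    have hsA : ∑ u, A u v = if ∃ i, v = y i then (1:ℝ) else 0 := by
      simp only [hA]
      exact aux_sum_ind x (fun i => v = y i) _ (fun u => Iff.rfl)
        (fun i j hi hj => hy (hi ▸ hj))
    have hsB : ∑ u, B u v = if ∃ i, v = y (i-1) then (1:ℝ) else 0 := by
      simp only [hB]
      exact aux_sum_ind x (fun i => v = y (i-1)) _ (fun u => Iff.rfl)
        (fun i j hi hj => by
          have h := hy (hi ▸ hj)
          exact sub_left_inj.mp h)
    have hiff : (∃ i : ZMod ℓ, v = y (i-1)) ↔ (∃ i : ZMod ℓ, v = y i) :=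
      ⟨fun ⟨i, h⟩ => ⟨i - 1, h⟩, fun ⟨j, h⟩ => ⟨j + 1, by simpa using h⟩⟩
    calc ∑ u, g u v = ∑ u, f u v - ε * ∑ u, A u v + ε * ∑ u, B u v := by
          simp only [hg]
          rw [Finset.sum_add_distrib, Finset.sum_sub_distrib, ← Finset.mul_sum,
            ← Finset.mul_sum]
      _ = ∑ u, f u v := by
          rw [hsA, hsB]
          simp only [hiff]
          ring
  have hrow : ∀ u, ∑ w, g u w = ∑ w, f u w := by
    intro u
    have hsA : ∑ w, A u w = if ∃ i, u = x i then (1:ℝ) else 0 := by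
      simp only [hA]
      exact aux_sum_ind y (fun i => u = x i) _
        (fun w => ⟨fun ⟨i, h1, h2⟩ => ⟨i, h2, h1⟩, fun ⟨i, h1, h2⟩ => ⟨i, h2, h1⟩⟩)
        (fun i j hi hj => hx (hi ▸ hj))
    have hsB : ∑ w, B u w = if ∃ i, u = x i then (1:ℝ) else 0 := by
      simp only [hB]
      exact aux_sum_ind (fun i => y (i-1)) (fun i => u = x i) _
        (fun w => ⟨fun ⟨i, h1, h2⟩ => ⟨i, h2, h1⟩, fun ⟨i, h1, h2⟩ => ⟨i, h2, h1⟩⟩)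
        (fun i j hi hj => hx (hi ▸ hj))
    calc ∑ w, g u w = ∑ w, f u w - ε * ∑ w, A u w + ε * ∑ w, B u w := by
          simp only [hg]
          rw [Finset.sum_add_distrib, Finset.sum_sub_distrib, ← Finset.mul_sum,
            ← Finset.mul_sum]
      _ = ∑ w, f u w := by
          rw [hsA, hsB]
          ring
  have hgzero : g (x i0) (y i0) = 0 := by
    have ha : ∃ i, x i0 = x i ∧ y i0 = y i := ⟨i0, rfl, rfl⟩
    have hb := hdisj _ _ ha
    simp only [hg, hA, hB]
    rw [if_pos ha, if_neg hb, ← hεi0]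
    ring
  have hsub : {p : V × V | 0 < g p.1 p.2} ⊆ {p : V × V | 0 < f p.1 p.2} :=
    fun p hp => hgf p.1 p.2 hp
  have hss : {p : V × V | 0 < g p.1 p.2} ⊂ {p : V × V | 0 < f p.1 p.2} := by
    rw [Set.ssubset_def]
    refine ⟨hsub, fun h => ?_⟩
    have hmem : ((x i0, y i0) : V × V) ∈ {p : V × V | 0 < f p.1 p.2} := (hedge i0).1
    have := h hmem
    simp only [Set.mem_setOf_eq] at this
    rw [hgzero] at this
    exact lt_irrefl 0 this
  refine ⟨g, ⟨hg0, fun u v hguv => hE' u v (hgf u v hguv), fun v hvs hvt => ?_⟩, ?_, hss, ?_⟩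
  · rw [hcol v, hrow v]
    exact hcons v hvs hvt
  · simp only [flowVal]
    rw [hrow s, hcol s]
  · exact Set.ncard_lt_ncard hss (Set.toFinite _)
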